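/- Let α, β, γ, δ, ε, τ ∈ k, and suppose that I = (t²⁰ + αt²¹ + βt²² + γt²⁷ + δt³³, t²⁶ + εt²⁷ + τt³³) is an Ulrich ideal of A = k⟦t⁵, t¹¹⟧ with I² = (t²⁰ + αt²¹ + βt²² + γt²⁷ + δt³³)·I. Then ε ≠ α, 3ε = 2α, and β = α² − 2ε². -/

import Mathlib

noncomputable section

open PowerSeries

set_option synthInstance.maxHeartbeats 400000
set_option maxHeartbeats 800000

variable (k : Type*) [Field k]

/-- The subalgebra of `k⟦t⟧` consisting of power series supported on an
additive submonoid `S ⊆ ℕ` (the "semigroup ring" of `S`). -/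
def semigroupRing (S : AddSubmonoid ℕ) : Subalgebra k (PowerSeries k) where
  carrier := {f | ∀ n : ℕ, coeff n f ≠ 0 → n ∈ S}
  zero_mem' := by intro n hn; simp at hn
  add_mem' := by
    intro f g hf hg n hn
    by_contra h
    exact hn (by
      rw [map_add, of_not_not fun h1 => h (hf n h1), of_not_not fun h2 => h (hg n h2), add_zero])
  one_mem' := by
    intro n hn
    rw [coeff_one] at hn
    simp only [ne_eq, ite_eq_right_iff, not_forall] at hn
    exact hn.1 ▸ S.zero_mem
  mul_mem' := by
    intro f g hf hg n hn
    rw [coeff_mul] at hn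
    obtain ⟨p, hp, hne⟩ := Finset.exists_ne_zero_of_sum_ne_zero hn
    rw [Finset.HasAntidiagonal.mem_antidiagonal] at hp
    exact hp ▸ S.add_mem (hf p.1 (left_ne_zero_of_mul hne)) (hg p.2 (right_ne_zero_of_mul hne))
  algebraMap_mem' := by
    intro a n hn
    have : (algebraMap k (PowerSeries k)) a = C a := rfl
    rw [this, coeff_C] at hn
    simp only [ne_eq, ite_eq_right_iff, not_forall] at hn
    exact hn.1 ▸ S.zero_mem

lemma X_pow_mem {S : AddSubmonoid ℕ} {n : ℕ} (hn : n ∈ S) :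
    (X : PowerSeries k) ^ n ∈ semigroupRing k S := by
  intro m hm
  rw [coeff_X_pow] at hm
  simp only [ne_eq, ite_eq_right_iff, not_forall] at hm
  exact hm.1 ▸ hn

/-- The maximal ideal of a subalgebra of `k⟦t⟧`: the kernel of the constant-coefficient map. -/
def maximalIdealOf (A : Subalgebra k (PowerSeries k)) : Ideal A :=
  RingHom.ker ((constantCoeff).comp A.val.toRingHom)

/-- `I` is an Ulrich ideal of `A`: `I` is `m`-primary, and there is `a ∈ I` such that `(a)`
is a reduction of `I`, `I ≠ (a)`, `I² = aI`, and `I/I²` is a free `A/I`-module. -/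
def IsUlrichIdeal (A : Subalgebra k (PowerSeries k)) (I : Ideal A) : Prop :=
  I.IsPrimary ∧ I.radical = maximalIdealOf k A ∧
  ∃ a ∈ I, (∃ n : ℕ, I ^ (n + 1) = Ideal.span {a} * I ^ n) ∧
    I ≠ Ideal.span {a} ∧
    I ^ 2 = Ideal.span {a} * I ∧
    Module.Free (A ⧸ I) I.Cotangent

/-- `A = k⟦t⁵, t¹¹⟧`. -/
def A511 : Subalgebra k (PowerSeries k) :=
  semigroupRing k (AddSubmonoid.closure ({5, 11} : Set ℕ))

lemma mem511 {n : ℕ} (a b : ℕ) (h : a * 5 + b * 11 = n) :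
    n ∈ AddSubmonoid.closure ({5, 11} : Set ℕ) := by
  subst h
  have h5 : (5 : ℕ) ∈ AddSubmonoid.closure ({5, 11} : Set ℕ) :=
    AddSubmonoid.subset_closure (by norm_num)
  have h11 : (11 : ℕ) ∈ AddSubmonoid.closure ({5, 11} : Set ℕ) :=
    AddSubmonoid.subset_closure (by norm_num)
  simpa [smul_eq_mul] using add_mem (nsmul_mem h5 a) (nsmul_mem h11 b)

/-- `f = t²⁰ + αt²¹ + βt²² + γt²⁷ + δt³³` as an element of `A = k⟦t⁵,t¹¹⟧`. -/
def genF (α β γ δ : k) : A511 k :=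
  ⟨X ^ 20 + α • X ^ 21 + β • X ^ 22 + γ • X ^ 27 + δ • X ^ 33, by
    refine add_mem (add_mem (add_mem (add_mem (X_pow_mem k (mem511 4 0 (by norm_num)))
      (Subalgebra.smul_mem _ (X_pow_mem k (mem511 2 1 (by norm_num))) α))
      (Subalgebra.smul_mem _ (X_pow_mem k (mem511 0 2 (by norm_num))) β))
      (Subalgebra.smul_mem _ (X_pow_mem k (mem511 1 2 (by norm_num))) γ))
      (Subalgebra.smul_mem _ (X_pow_mem k (mem511 0 3 (by norm_num))) δ)⟩

/-- `g = t²⁶ + εt²⁷ + τt³³` as an element of `A = k⟦t⁵,t¹¹⟧`. -/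
def genG (ε τ : k) : A511 k :=
  ⟨X ^ 26 + ε • X ^ 27 + τ • X ^ 33, by
    refine add_mem (add_mem (X_pow_mem k (mem511 3 1 (by norm_num)))
      (Subalgebra.smul_mem _ (X_pow_mem k (mem511 1 2 (by norm_num))) ε))
      (Subalgebra.smul_mem _ (X_pow_mem k (mem511 0 3 (by norm_num))) τ)⟩

/-- `f = t¹⁰ + α₁t¹¹ + α₂t¹⁶ + α₃t²²` as an element of `A = k⟦t⁵,t¹¹⟧`. -/
def genF10 (α₁ α₂ α₃ : k) : A511 k :=
  ⟨X ^ 10 + α₁ • X ^ 11 + α₂ • X ^ 16 + α₃ • X ^ 22, by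
    refine add_mem (add_mem (add_mem (X_pow_mem k (mem511 2 0 (by norm_num)))
      (Subalgebra.smul_mem _ (X_pow_mem k (mem511 0 1 (by norm_num))) α₁))
      (Subalgebra.smul_mem _ (X_pow_mem k (mem511 1 1 (by norm_num))) α₂))
      (Subalgebra.smul_mem _ (X_pow_mem k (mem511 0 2 (by norm_num))) α₃)⟩

/-- `g = t²⁷` as an element of `A = k⟦t⁵,t¹¹⟧`. -/
def genG27 : A511 k :=
  ⟨X ^ 27, X_pow_mem k (mem511 1 2 (by norm_num))⟩

/-- `t³² + εt³³` as an element of `A = k⟦t⁵,t¹¹⟧`. -/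
def elt32 (ε : k) : A511 k :=
  ⟨X ^ 32 + ε • X ^ 33, by
    refine add_mem (X_pow_mem k (mem511 2 2 (by norm_num)))
      (Subalgebra.smul_mem _ (X_pow_mem k (mem511 0 3 (by norm_num))) ε)⟩



lemma not_mem_511 {n : ℕ} (h : ∀ a b : ℕ, a * 5 + b * 11 ≠ n) :
    n ∉ AddSubmonoid.closure ({5, 11} : Set ℕ) := by
  rw [AddSubmonoid.mem_closure_pair]
  rintro ⟨a, b, hab⟩
  exact h a b (by simpa [smul_eq_mul] using hab)

lemma coeff_zero_of_not_mem (w : A511 k) (n : ℕ) (h : ∀ a b : ℕ, a * 5 + b * 11 ≠ n) :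
    coeff n (w : PowerSeries k) = 0 := by
  by_contra hc
  exact not_mem_511 h (w.2 n hc)

lemma coeff_mul_CX (c : k) (i n : ℕ) (p : PowerSeries k) :
    coeff n (p * (C c * X ^ i)) = if i ≤ n then c * coeff (n - i) p else 0 := by
  rw [show p * (C c * X ^ i) = C c * (p * X ^ i) by ring, coeff_C_mul, coeff_mul_X_pow']
  split_ifs <;> simp

/-- if `I = (t²⁰ + αt²¹ + βt²² + γt²⁷ + δt³³, t²⁶ + εt²⁷ + τt³³)` is an
Ulrich ideal of `A = k⟦t⁵,t¹¹⟧` with `I² = fI`, then `ε ≠ α`, `3ε = 2α`, `β = α² − 2ε²`. -/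
theorem ulrich_511_orders_20_26_coeff_relations (α β γ δ ε τ : k)
    (hU : IsUlrichIdeal k (A511 k) (Ideal.span {genF k α β γ δ, genG k ε τ}))
    (hred : (Ideal.span {genF k α β γ δ, genG k ε τ}) ^ 2
         = Ideal.span {genF k α β γ δ} * Ideal.span {genF k α β γ δ, genG k ε τ}) :
    ε ≠ α ∧ 3 * ε = 2 * α ∧ β = α ^ 2 - 2 * ε ^ 2 := by
  have hg2 : genG k ε τ * genG k ε τ ∈ (Ideal.span {genF k α β γ δ, genG k ε τ}) ^ 2 := by
    rw [sq]
    exact Ideal.mul_mem_mul (Ideal.subset_span (by simp)) (Ideal.subset_span (by simp))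
  rw [hred, Ideal.mem_span_singleton_mul] at hg2
  obtain ⟨h, hhI, hfh⟩ := hg2
  rw [Ideal.mem_span_pair] at hhI
  obtain ⟨u, v, huv⟩ := hhI
  rw [← huv] at hfh
  have heq := congrArg Subtype.val hfh
  push_cast at heq
  have hfv : ((genF k α β γ δ : A511 k) : PowerSeries k)
      = X ^ 20 + C α * X ^ 21 + C β * X ^ 22 + C γ * X ^ 27 + C δ * X ^ 33 := by
    simp [genF, smul_eq_C_mul]
  have hgv : ((genG k ε τ : A511 k) : PowerSeries k)
      = X ^ 26 + C ε * X ^ 27 + C τ * X ^ 33 := by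
    simp [genG, smul_eq_C_mul]
  rw [hfv, hgv] at heq
  obtain ⟨a41, ha41⟩ : ∃ x : k, x = 2*α := ⟨_, rfl⟩
  obtain ⟨a42, ha42⟩ : ∃ x : k, x = α^2+2*β := ⟨_, rfl⟩
  obtain ⟨a43, ha43⟩ : ∃ x : k, x = 2*α*β := ⟨_, rfl⟩
  obtain ⟨a44, ha44⟩ : ∃ x : k, x = β^2 := ⟨_, rfl⟩
  obtain ⟨a47, ha47⟩ : ∃ x : k, x = 2*γ := ⟨_, rfl⟩
  obtain ⟨a48, ha48⟩ : ∃ x : k, x = 2*α*γ := ⟨_, rfl⟩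
  obtain ⟨a49, ha49⟩ : ∃ x : k, x = 2*β*γ := ⟨_, rfl⟩
  obtain ⟨a53, ha53⟩ : ∃ x : k, x = 2*δ := ⟨_, rfl⟩
  obtain ⟨a54, ha54⟩ : ∃ x : k, x = γ^2+2*α*δ := ⟨_, rfl⟩
  obtain ⟨a55, ha55⟩ : ∃ x : k, x = 2*β*δ := ⟨_, rfl⟩
  obtain ⟨a60, ha60⟩ : ∃ x : k, x = 2*γ*δ := ⟨_, rfl⟩
  obtain ⟨a66, ha66⟩ : ∃ x : k, x = δ^2 := ⟨_, rfl⟩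
  obtain ⟨b47, hb47⟩ : ∃ x : k, x = ε+α := ⟨_, rfl⟩
  obtain ⟨b48, hb48⟩ : ∃ x : k, x = α*ε+β := ⟨_, rfl⟩
  obtain ⟨b49, hb49⟩ : ∃ x : k, x = β*ε := ⟨_, rfl⟩
  obtain ⟨b53, hb53⟩ : ∃ x : k, x = τ+γ := ⟨_, rfl⟩
  obtain ⟨b54, hb54⟩ : ∃ x : k, x = γ*ε+α*τ := ⟨_, rfl⟩
  obtain ⟨b55, hb55⟩ : ∃ x : k, x = β*τ := ⟨_, rfl⟩
  obtain ⟨b60, hb60⟩ : ∃ x : k, x = γ*τ+δ*ε := ⟨_, rfl⟩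
  obtain ⟨b66, hb66⟩ : ∃ x : k, x = δ*τ := ⟨_, rfl⟩
  obtain ⟨g53, hg53⟩ : ∃ x : k, x = 2*ε := ⟨_, rfl⟩
  obtain ⟨g54, hg54⟩ : ∃ x : k, x = ε^2 := ⟨_, rfl⟩
  obtain ⟨g59, hg59⟩ : ∃ x : k, x = 2*τ := ⟨_, rfl⟩
  obtain ⟨g60, hg60⟩ : ∃ x : k, x = 2*ε*τ := ⟨_, rfl⟩
  obtain ⟨g66, hg66⟩ : ∃ x : k, x = τ^2 := ⟨_, rfl⟩
  have heq2 : (C 1 * X ^ 52 + C g53 * X ^ 53 + C g54 * X ^ 54 + C g59 * X ^ 59 + C g60 * X ^ 60 + C g66 * X ^ 66 : PowerSeries k)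
      = (u : PowerSeries k) * (C 1 * X ^ 40 + C a41 * X ^ 41 + C a42 * X ^ 42 + C a43 * X ^ 43 + C a44 * X ^ 44 + C a47 * X ^ 47 + C a48 * X ^ 48 + C a49 * X ^ 49 + C a53 * X ^ 53 + C a54 * X ^ 54 + C a55 * X ^ 55 + C a60 * X ^ 60 + C a66 * X ^ 66)
        + (v : PowerSeries k) * (C 1 * X ^ 46 + C b47 * X ^ 47 + C b48 * X ^ 48 + C b49 * X ^ 49 + C b53 * X ^ 53 + C b54 * X ^ 54 + C b55 * X ^ 55 + C δ * X ^ 59 + C b60 * X ^ 60 + C b66 * X ^ 66) := by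
    rw [ha41, ha42, ha43, ha44, ha47, ha48, ha49, ha53, ha54, ha55, ha60, ha66, hb47, hb48, hb49, hb53, hb54, hb55, hb60, hb66, hg53, hg54, hg59, hg60, hg66]
    simp only [map_mul, map_add, map_pow, map_one, map_ofNat]
    linear_combination -heq
  have e40 := congrArg (coeff 40) heq2
  simp only [map_add, mul_add, coeff_mul_CX, coeff_C_mul_X_pow] at e40
  norm_num at e40
  have e45 := congrArg (coeff 45) heq2
  simp only [map_add, mul_add, coeff_mul_CX, coeff_C_mul_X_pow] at e45
  norm_num at e45
  have e46 := congrArg (coeff 46) heq2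
  simp only [map_add, mul_add, coeff_mul_CX, coeff_C_mul_X_pow] at e46
  norm_num at e46
  have e50 := congrArg (coeff 50) heq2
  simp only [map_add, mul_add, coeff_mul_CX, coeff_C_mul_X_pow] at e50
  norm_num at e50
  have e51 := congrArg (coeff 51) heq2
  simp only [map_add, mul_add, coeff_mul_CX, coeff_C_mul_X_pow] at e51
  norm_num at e51
  have e52 := congrArg (coeff 52) heq2
  simp only [map_add, mul_add, coeff_mul_CX, coeff_C_mul_X_pow] at e52
  norm_num at e52
  have e53 := congrArg (coeff 53) heq2
  simp only [map_add, mul_add, coeff_mul_CX, coeff_C_mul_X_pow] at e53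
  norm_num at e53
  have e54 := congrArg (coeff 54) heq2
  simp only [map_add, mul_add, coeff_mul_CX, coeff_C_mul_X_pow] at e54
  norm_num at e54
  have hu1 : coeff 1 (u : PowerSeries k) = 0 := coeff_zero_of_not_mem k u 1 (by intro a b; omega)
  have hu2 : coeff 2 (u : PowerSeries k) = 0 := coeff_zero_of_not_mem k u 2 (by intro a b; omega)
  have hu3 : coeff 3 (u : PowerSeries k) = 0 := coeff_zero_of_not_mem k u 3 (by intro a b; omega)
  have hu4 : coeff 4 (u : PowerSeries k) = 0 := coeff_zero_of_not_mem k u 4 (by intro a b; omega)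
  have hu6 : coeff 6 (u : PowerSeries k) = 0 := coeff_zero_of_not_mem k u 6 (by intro a b; omega)
  have hu7 : coeff 7 (u : PowerSeries k) = 0 := coeff_zero_of_not_mem k u 7 (by intro a b; omega)
  have hu8 : coeff 8 (u : PowerSeries k) = 0 := coeff_zero_of_not_mem k u 8 (by intro a b; omega)
  have hu9 : coeff 9 (u : PowerSeries k) = 0 := coeff_zero_of_not_mem k u 9 (by intro a b; omega)
  have hu12 : coeff 12 (u : PowerSeries k) = 0 := coeff_zero_of_not_mem k u 12 (by intro a b; omega)
  have hu13 : coeff 13 (u : PowerSeries k) = 0 := coeff_zero_of_not_mem k u 13 (by intro a b; omega)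
  have hu14 : coeff 14 (u : PowerSeries k) = 0 := coeff_zero_of_not_mem k u 14 (by intro a b; omega)
  have hv1 : coeff 1 (v : PowerSeries k) = 0 := coeff_zero_of_not_mem k v 1 (by intro a b; omega)
  have hv2 : coeff 2 (v : PowerSeries k) = 0 := coeff_zero_of_not_mem k v 2 (by intro a b; omega)
  have hv3 : coeff 3 (v : PowerSeries k) = 0 := coeff_zero_of_not_mem k v 3 (by intro a b; omega)
  have hv4 : coeff 4 (v : PowerSeries k) = 0 := coeff_zero_of_not_mem k v 4 (by intro a b; omega)
  have hv6 : coeff 6 (v : PowerSeries k) = 0 := coeff_zero_of_not_mem k v 6 (by intro a b; omega)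
  have hv7 : coeff 7 (v : PowerSeries k) = 0 := coeff_zero_of_not_mem k v 7 (by intro a b; omega)
  have hv8 : coeff 8 (v : PowerSeries k) = 0 := coeff_zero_of_not_mem k v 8 (by intro a b; omega)
  have hu0 : constantCoeff (u : PowerSeries k) = 0 := e40.symm
  simp only [hu1, hu2, hu3, hu4, hu6, hu7, hu8, hu9, hu12, hu13, hu14, hv1, hv2, hv3, hv4, hv6, hv7, hv8, hu0, mul_zero, zero_add, add_zero] at e45 e46 e50 e51 e52 e53 e54
  have hu5 : coeff 5 (u : PowerSeries k) = 0 := e45.symm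
  simp only [hu5, mul_zero, zero_add, add_zero] at e46 e51 e52 e53 e54
  have hv0 : constantCoeff (v : PowerSeries k) = 0 := e46.symm
  simp only [hv0, mul_zero, zero_add, add_zero] at e53 e54
  have hu10 : coeff 10 (u : PowerSeries k) = 0 := e50.symm
  simp only [hu10, mul_zero, zero_add, add_zero] at e51 e52 e53 e54
  subst ha41 ha42 ha43 ha44 ha47 ha48 ha49 ha53 ha54 ha55 ha60 ha66 hb47 hb48 hb49 hb53 hb54 hb55 hb60 hb66 hg53 hg54 hg59 hg60 hg66
  have hc : coeff 11 (u : PowerSeries k) * (α - ε) = 1 := by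
    linear_combination -e52 + (ε + α) * e51
  have hA : coeff 11 (u : PowerSeries k) * (α ^ 2 + β - α * ε) = 2 * ε := by
    linear_combination -e53 + (α * ε + β) * e51
  have hB : coeff 11 (u : PowerSeries k) * (β * (2 * α - ε)) = ε ^ 2 := by
    linear_combination -e54 + β * ε * e51
  have hne : ε ≠ α := by
    intro hh
    rw [hh] at hc
    simp at hc
  have hd : α - ε ≠ 0 := sub_ne_zero_of_ne (Ne.symm hne)
  have h1 : α ^ 2 + β - α * ε = 2 * ε * (α - ε) := by
    linear_combination (α - ε) * hA - (α ^ 2 + β - α * ε) * hc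
  have h2 : β * (2 * α - ε) = ε ^ 2 * (α - ε) := by
    linear_combination (α - ε) * hB - (β * (2 * α - ε)) * hc
  have hkey : (α - ε) ^ 2 * (2 * α - 3 * ε) = 0 := by
    linear_combination (2 * α - ε) * h1 - h2
  have h2a3 : 2 * α - 3 * ε = 0 :=
    (mul_eq_zero.mp hkey).resolve_left (pow_ne_zero 2 hd)
  exact ⟨hne, by linear_combination -h2a3, by linear_combination h1 - α * h2a3⟩
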